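/- μ-normality implies μ-block normality: if X ∈ A^ω is μ-normal, then for every nonempty word w ∈ A^k, lim_{m→∞} (1/m)·#{0 ≤ i < m : X(ki)⋯X(ki+k−1) = w} = μ(w). -/

import Mathlib

open Filter Topology

/-- The prefix `X(0) X(1) ⋯ X(n-1)` of an infinite sequence, as a list. -/
def pref {A : Type*} (X : ℕ → A) (n : ℕ) : List A := (List.range n).map X

/-- Number of occurrences of the word `w` in the prefix `X[0..n]`
(indices `i` with `0 ≤ i ≤ n - |w| + 1`). -/
def nbocc {A : Type*} [DecidableEq A] (w : List A) (X : ℕ → A) (n : ℕ) : ℕ :=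
  ((Finset.range (n + 2 - w.length)).filter
    (fun i => (List.range w.length).map (fun j => X (i + j)) = w)).card

/-- Frequency of occurrences of `w` in `X[0..n]`. -/
noncomputable def freq {A : Type*} [DecidableEq A] (w : List A) (X : ℕ → A) (n : ℕ) : ℝ :=
  (nbocc w X n : ℝ) / ((n + 2 - w.length : ℕ) : ℝ)

/-- The Bernoulli measure of a word: product of the measures of its letters. -/
def wmeas {A : Type*} (μ : A → ℝ) (w : List A) : ℝ := (w.map μ).prod

/-- `X` is `μ`-normal: every nonempty word occurs with asymptotic frequency `μ(w)`. -/
def BNormal {A : Type*} [DecidableEq A] (μ : A → ℝ) (X : ℕ → A) : Prop :=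
  ∀ w : List A, w ≠ [] → Tendsto (fun n => freq w X n) atTop (𝓝 (wmeas μ w))

/-- Iterated transition function of a deterministic automaton. -/
def dstar {Q A : Type*} (δ : Q → A → Q) (q : Q) (w : List A) : Q := w.foldl δ q

/-- Capital of an automatic gambler started in state `q` after reading `w`. -/
def capital {Q A : Type*} (δ : Q → A → Q) (γ : Q → A → ℝ) : Q → List A → ℝ
  | _, [] => 1
  | q, a :: w => γ q a * capital δ γ (δ q a) w

/-- Number of aligned (block) occurrences of `w` at positions `k·i`, `i < m`,
where `k = |w|`. -/
def nboccBlock {A : Type*} [DecidableEq A] (w : List A) (X : ℕ → A) (m : ℕ) : ℕ :=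
  ((Finset.range m).filter
    (fun i => (List.range w.length).map (fun j => X (w.length * i + j)) = w)).card

namespace NB
lemma map_range_eq_iff {A : Type*} (f : ℕ → A) (u : List A) :
    (List.range u.length).map f = u ↔ ∀ i, (h : i < u.length) → f i = u[i] := by
  constructor
  · intro h i hi
    have := congrArg (fun l => l[i]?) h
    simp only [List.getElem?_map] at this
    rw [List.getElem?_eq_getElem (by simpa using hi), List.getElem?_eq_getElem hi] at this
    simpa using this
  · intro h
    apply List.ext_getElem (by simp)
    intro n h1 h2
    simpa using h n h2

def twd {A : Type*} {k t : ℕ} (y : Fin t → (Fin k → A)) : List A :=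
  (List.ofFn fun j => List.ofFn (y j)).flatten

lemma ofFn_match {A : Type*} {k : ℕ} (f : ℕ → A) (b : Fin k → A) :
    (List.range k).map f = List.ofFn b ↔ ∀ i : Fin k, f i = b i := by
  have h0 : (List.ofFn b).length = k := by simp
  constructor
  · intro h i
    have h' : (List.range (List.ofFn b).length).map f = List.ofFn b := by rw [h0]; exact h
    have := (map_range_eq_iff f (List.ofFn b)).1 h' i (by simp [h0, i.2])
    simpa using this
  · intro h
    apply List.ext_getElem (by simp)
    intro n h1 h2
    simp only [List.getElem_map, List.getElem_range, List.getElem_ofFn]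
    exact h ⟨n, by simpa using h1⟩

lemma twd_occ {A : Type*} {k t : ℕ} (X : ℕ → A) (q : ℕ) (y : Fin t → (Fin k → A)) :
    (List.range (t * k)).map (fun i => X (q + i)) = twd y ↔
      ∀ (j : Fin t) (i : Fin k), X (q + (k * j + i)) = y j i := by
  induction t generalizing q with
  | zero => simp [twd]
  | succ t ih =>
      have hsplit : twd y = List.ofFn (y 0) ++ twd (fun j : Fin t => y j.succ) := by
        simp [twd, List.ofFn_succ]
      rw [hsplit]
      have hrange : (t+1) * k = k + t * k := by ring
      rw [hrange, List.range_add, List.map_append, List.map_map]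
      have hcomp : ((fun i => X (q + i)) ∘ (fun x => k + x)) = fun i => X ((q + k) + i) := by
        funext i; simp [Function.comp]; ring_nf
      rw [hcomp]
      constructor
      · intro h
        obtain ⟨h1, h2⟩ := List.append_inj h (by simp)
        intro j i
        refine Fin.cases ?_ ?_ j
        · simpa using (ofFn_match _ _).1 h1 i
        · intro j'
          have := (ih (q + k) _).1 h2 j' i
          rw [← this]
          congr 1
          push_cast [Fin.val_succ]
          ring
      · intro h
        have h1 : (List.range k).map (fun i => X (q + i)) = List.ofFn (y 0) :=
          (ofFn_match _ _).2 (fun i => by simpa using h 0 i)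
        have h2 : (List.range (t*k)).map (fun i => X ((q + k) + i)) = twd (fun j : Fin t => y j.succ) := by
          refine (ih (q + k) _).2 ?_
          intro j i
          have := h j.succ i
          rw [← this]
          congr 1
          push_cast [Fin.val_succ]
          ring
        rw [h1, h2]

def EE {B : Type*} [Fintype B] (ν : B → ℝ) (t : ℕ) (f : (Fin t → B) → ℝ) : ℝ :=
  ∑ y : Fin t → B, (∏ j, ν (y j)) * f y

lemma EE_succ {B : Type*} [Fintype B] (ν : B → ℝ) (t : ℕ) (f : (Fin (t+1) → B) → ℝ) :
    EE ν (t+1) f = ∑ b, ν b * EE ν t (fun y => f (Fin.cons b y)) := by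
  rw [EE, ← Equiv.sum_comp (Fin.consEquiv (fun _ : Fin (t+1) => B))]
  rw [Fintype.sum_prod_type]
  refine Finset.sum_congr rfl fun b _ => ?_
  rw [EE, Finset.mul_sum]
  refine Finset.sum_congr rfl fun y _ => ?_
  simp only [Fin.consEquiv_apply]
  rw [Fin.prod_univ_succ]
  simp only [Fin.cons_zero, Fin.cons_succ]
  rw [mul_assoc]
  rfl

def SS {B : Type*} [DecidableEq B] (ν : B → ℝ) (w0 : B) (t : ℕ) (y : Fin t → B) : ℝ :=
  ∑ j, ((if y j = w0 then (1:ℝ) else 0) - ν w0)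

lemma SS_cons {B : Type*} [DecidableEq B] (ν : B → ℝ) (w0 : B) (t : ℕ) (b : B) (y : Fin t → B) :
    SS ν w0 (t+1) (Fin.cons b y) = ((if b = w0 then (1:ℝ) else 0) - ν w0) + SS ν w0 t y := by
  rw [SS, SS]
  rw [← Fin.sum_cons (((if b = w0 then (1:ℝ) else 0) - ν w0)) (fun j => ((if y j = w0 then (1:ℝ) else 0) - ν w0))]
  refine Finset.sum_congr rfl fun j _ => ?_
  refine Fin.cases ?_ (fun i => ?_) j <;> simp


lemma moments {B : Type*} [Fintype B] [DecidableEq B] (ν : B → ℝ) (w0 : B) (hν0 : ∀ b, 0 ≤ ν b) (hν1 : ∑ b, ν b = 1) :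
    ∀ t : ℕ, EE ν t (fun _ => 1) = 1 ∧ EE ν t (SS ν w0 t) = 0 ∧
      EE ν t (fun y => (SS ν w0 t y)^2) ≤ t ∧
      EE ν t (fun y => (SS ν w0 t y)^4) ≤ 3 * t^2 := by
  have hp0 : 0 ≤ ν w0 := hν0 w0
  have hp1 : ν w0 ≤ 1 := by
    rw [← hν1]
    exact Finset.single_le_sum (fun b _ => hν0 b) (Finset.mem_univ w0)
  set p := ν w0 with hp
  set Z : B → ℝ := fun b => (if b = w0 then (1:ℝ) else 0) - p with hZ
  have hX1 : ∀ b : B, |Z b| ≤ 1 := by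
    intro b
    show |(if b = w0 then (1:ℝ) else 0) - p| ≤ 1
    split <;> rw [abs_sub_le_iff] <;> constructor <;> nlinarith
  have hXm : ∑ b, ν b * Z b = 0 := by
    show ∑ b, ν b * ((if b = w0 then (1:ℝ) else 0) - p) = 0
    simp only [mul_sub, Finset.sum_sub_distrib, mul_ite, mul_one, mul_zero,
      Finset.sum_ite_eq', Finset.mem_univ, if_true, ← Finset.sum_mul, hν1]
    ring
  have hX2 : ∀ m : ℕ, ∑ b, ν b * (Z b)^m ≤ 1 := by
    intro m
    calc ∑ b, ν b * (Z b)^m ≤ ∑ b, ν b * 1 := by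
          refine Finset.sum_le_sum fun b _ => ?_
          refine mul_le_mul_of_nonneg_left ?_ (hν0 b)
          calc (Z b)^m ≤ |(Z b)^m| := le_abs_self _
            _ = |Z b|^m := by rw [abs_pow]
            _ ≤ 1 := pow_le_one₀ (abs_nonneg _) (hX1 b)
      _ = 1 := by simp [hν1]
  intro t
  induction t with
  | zero => refine ⟨?_, ?_, ?_, ?_⟩ <;> simp [EE, SS]
  | succ t ih =>
      obtain ⟨ih1, ihS, ih2, ih4⟩ := ih
      have key : ∀ g : (Fin (t+1) → B) → ℝ,
          EE ν (t+1) g = ∑ b, ν b * EE ν t (fun y => g (Fin.cons b y)) := EE_succ ν t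
      have hEElin : ∀ (c : ℝ) (f g : (Fin t → B) → ℝ),
          EE ν t (fun y => c * f y + g y) = c * EE ν t f + EE ν t g := by
        intro c f g
        rw [EE, EE, EE, Finset.mul_sum, ← Finset.sum_add_distrib]
        exact Finset.sum_congr rfl fun y _ => by ring
      have hES2nn : 0 ≤ EE ν t (fun y => (SS ν w0 t y)^2) := by
        rw [EE]
        refine Finset.sum_nonneg fun y _ => ?_
        have : 0 ≤ ∏ j, ν (y j) := Finset.prod_nonneg fun j _ => hν0 (y j)
        positivity
      refine ⟨?_, ?_, ?_, ?_⟩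
      · rw [key]
        rw [Finset.sum_congr rfl (fun b _ => by rw [ih1])]
        simp [hν1]
      · rw [key (SS ν w0 (t+1))]
        have hb : ∀ b : B, EE ν t (fun y => SS ν w0 (t+1) (Fin.cons b y)) = Z b := by
          intro b
          have heq : (fun y : Fin t → B => SS ν w0 (t+1) (Fin.cons b y))
              = fun y => Z b * 1 + SS ν w0 t y := by
            funext y; rw [SS_cons]; show _ = ((if b = w0 then (1:ℝ) else 0) - p) * 1 + _; ring
          rw [heq, hEElin, ih1, ihS]
          ring
        rw [Finset.sum_congr rfl (fun b _ => by rw [hb b])]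
        exact hXm
      · rw [key]
        have hb : ∀ b : B, EE ν t (fun y => (SS ν w0 (t+1) (Fin.cons b y))^2)
            = (Z b)^2 + 2 * Z b * EE ν t (SS ν w0 t) + EE ν t (fun y => (SS ν w0 t y)^2) := by
          intro b
          have heq : (fun y : Fin t → B => (SS ν w0 (t+1) (Fin.cons b y))^2)
              = fun y => (Z b)^2 * 1 + ((2 * Z b) * SS ν w0 t y + (SS ν w0 t y)^2) := by
            funext y; rw [SS_cons]
            show _ = ((if b = w0 then (1:ℝ) else 0) - p)^2 * 1 + _
            have : (fun y : Fin t → B => (SS ν w0 t y)^2) y = (SS ν w0 t y)^2 := rfl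
            ring
          rw [heq, hEElin]
          have := hEElin (2 * Z b) (SS ν w0 t) (fun y => (SS ν w0 t y)^2)
          rw [this, ih1]
          ring
        rw [Finset.sum_congr rfl (fun b _ => by rw [hb b, ihS])]
        have e1 : ∀ b : B, ν b * ((Z b)^2 + 2 * Z b * 0 + EE ν t (fun y => (SS ν w0 t y)^2))
            = ν b * (Z b)^2 + ν b * EE ν t (fun y => (SS ν w0 t y)^2) := by intro b; ring
        rw [Finset.sum_congr rfl (fun b _ => e1 b), Finset.sum_add_distrib, ← Finset.sum_mul, hν1]
        have := hX2 2
        push_cast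
        nlinarith [ih2]
      · rw [key]
        have hb : ∀ b : B, EE ν t (fun y => (SS ν w0 (t+1) (Fin.cons b y))^4)
            = (Z b)^4 + 4*(Z b)^3 * EE ν t (SS ν w0 t) + 6*(Z b)^2 * EE ν t (fun y => (SS ν w0 t y)^2)
              + 4*(Z b) * EE ν t (fun y => (SS ν w0 t y)^3) + EE ν t (fun y => (SS ν w0 t y)^4) := by
          intro b
          have heq : (fun y : Fin t → B => (SS ν w0 (t+1) (Fin.cons b y))^4)
              = fun y => (Z b)^4 * 1 + ((4*(Z b)^3) * SS ν w0 t y +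
                ((6*(Z b)^2) * (SS ν w0 t y)^2 + ((4*(Z b)) * (SS ν w0 t y)^3 + (SS ν w0 t y)^4))) := by
            funext y; rw [SS_cons]
            show _ = ((if b = w0 then (1:ℝ) else 0) - p)^4 * 1 + _
            ring
          rw [heq, hEElin]
          rw [hEElin (4*(Z b)^3) (SS ν w0 t)]
          rw [hEElin (6*(Z b)^2) (fun y => (SS ν w0 t y)^2)]
          rw [hEElin (4*(Z b)) (fun y => (SS ν w0 t y)^3), ih1]
          ring
        rw [Finset.sum_congr rfl (fun b _ => by rw [hb b, ihS])]
        have e1 : ∀ b : B, ν b * ((Z b)^4 + 4*(Z b)^3 * 0 + 6*(Z b)^2 * EE ν t (fun y => (SS ν w0 t y)^2)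
              + 4*(Z b) * EE ν t (fun y => (SS ν w0 t y)^3) + EE ν t (fun y => (SS ν w0 t y)^4))
            = ν b * (Z b)^4 + (ν b * (Z b)^2) * (6 * EE ν t (fun y => (SS ν w0 t y)^2))
              + (ν b * Z b) * (4 * EE ν t (fun y => (SS ν w0 t y)^3))
              + ν b * EE ν t (fun y => (SS ν w0 t y)^4) := by intro b; ring
        rw [Finset.sum_congr rfl (fun b _ => e1 b), Finset.sum_add_distrib, Finset.sum_add_distrib,
          Finset.sum_add_distrib, ← Finset.sum_mul, ← Finset.sum_mul, ← Finset.sum_mul, hXm, hν1]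
        have h4 := hX2 4
        have h2 := hX2 2
        push_cast
        nlinarith [ih4, ih2, hES2nn]
lemma SS_eq_cnt {B : Type*} [Fintype B] [DecidableEq B] (ν : B → ℝ) (w0 : B) (t : ℕ)
    (y : Fin t → B) :
    SS ν w0 t y = ((Finset.univ.filter (fun j => y j = w0)).card : ℝ) - t * ν w0 := by
  rw [SS, Finset.sum_sub_distrib, Finset.sum_const, Finset.card_univ, Fintype.card_fin]
  rw [Finset.sum_boole]
  push_cast
  ring

lemma cheb {B : Type*} [Fintype B] [DecidableEq B] (ν : B → ℝ) (w0 : B)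
    (hν0 : ∀ b, 0 ≤ ν b) (hν1 : ∑ b, ν b = 1) (t : ℕ) (ht : 0 < t) (δ : ℝ) (hδ : 0 < δ) :
    ∑ y ∈ Finset.univ.filter (fun y : Fin t → B => δ * t < |SS ν w0 t y|), (∏ j, ν (y j))
      ≤ 3 / (δ^4 * t^2) := by
  have h4 := (moments ν w0 hν0 hν1 t).2.2.2
  have htpos : (0:ℝ) < t := by exact_mod_cast ht
  have step1 : (δ*(t:ℝ))^4 * ∑ y ∈ Finset.univ.filter (fun y : Fin t → B => δ * t < |SS ν w0 t y|), (∏ j, ν (y j))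
      ≤ EE ν t (fun y => (SS ν w0 t y)^4) := by
    rw [Finset.mul_sum, EE]
    refine le_trans (Finset.sum_le_sum ?_)
      (Finset.sum_le_sum_of_subset_of_nonneg (Finset.filter_subset _ _) ?_)
    · intro y hy
      have hyB : δ * t < |SS ν w0 t y| := (Finset.mem_filter.1 hy).2
      have hprodnn : (0:ℝ) ≤ ∏ j, ν (y j) := Finset.prod_nonneg fun j _ => hν0 _
      have hpow : (δ*(t:ℝ))^4 ≤ (SS ν w0 t y)^4 := by
        have h1 : (δ*(t:ℝ)) ≤ |SS ν w0 t y| := hyB.le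
        calc (δ*(t:ℝ))^4 ≤ |SS ν w0 t y|^4 := by
              exact pow_le_pow_left₀ (by positivity) h1 4
          _ = |(SS ν w0 t y)^4| := by rw [abs_pow]
          _ = (SS ν w0 t y)^4 := abs_of_nonneg (by positivity)
      rw [mul_comm ((δ*(t:ℝ))^4)]
      exact mul_le_mul_of_nonneg_left hpow hprodnn
    · intro y _ _
      have hprodnn : (0:ℝ) ≤ ∏ j, ν (y j) := Finset.prod_nonneg fun j _ => hν0 _
      exact mul_nonneg hprodnn (by positivity)
  have key := step1.trans h4
  rw [le_div_iff₀ (by positivity)]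
  have h5 : (∑ y ∈ Finset.univ.filter (fun y : Fin t → B => δ * t < |SS ν w0 t y|), (∏ j, ν (y j)))
      * (δ^4 * (t:ℝ)^2) * (t:ℝ)^2 ≤ 3 * (t:ℝ)^2 := by
    calc (∑ y ∈ Finset.univ.filter (fun y : Fin t → B => δ * t < |SS ν w0 t y|), (∏ j, ν (y j)))
        * (δ^4 * (t:ℝ)^2) * (t:ℝ)^2
        = (δ*(t:ℝ))^4 * ∑ y ∈ Finset.univ.filter (fun y : Fin t → B => δ * t < |SS ν w0 t y|), (∏ j, ν (y j)) := by ring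
      _ ≤ 3 * (t:ℝ)^2 := key
  exact le_of_mul_le_mul_right h5 (pow_pos htpos 2)

lemma filter_range_mul_card (P : ℕ → Prop) [DecidablePred P] (t : ℕ) :
    ∀ J : ℕ, ((Finset.range (J*t)).filter P).card
      = ∑ j ∈ Finset.range J, ((Finset.range t).filter (fun s => P (j*t+s))).card := by
  intro J
  simp only [Finset.card_filter]
  induction J with
  | zero => simp
  | succ J ih =>
      rw [show (J+1)*t = J*t + t by ring, Finset.sum_range_add, ih, Finset.sum_range_succ]

lemma length_twd {A : Type*} {k t : ℕ} (y : Fin t → (Fin k → A)) :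
    (twd y).length = t * k := by
  simp [twd, List.length_flatten, Function.comp_def, List.map_ofFn, List.sum_ofFn, mul_comm]

lemma wmeas_twd {A : Type*} (μ : A → ℝ) {k t : ℕ} (y : Fin t → (Fin k → A)) :
    wmeas μ (twd y) = ∏ j, ∏ i, μ (y j i) := by
  simp [wmeas, twd, List.map_flatten, List.map_ofFn, List.prod_flatten, Function.comp_def,
    List.prod_ofFn]

lemma twd_ne_nil {A : Type*} {k t : ℕ} (hk : 0 < k) (ht : 0 < t) (y : Fin t → (Fin k → A)) :
    twd y ≠ [] := by
  intro h
  have h2 := length_twd y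
  rw [h] at h2
  simp only [List.length_nil] at h2
  have := Nat.mul_pos ht hk
  omega

lemma sum_nu {A : Type*} [Fintype A] [DecidableEq A] (μ : A → ℝ) (hμsum : ∑ a, μ a = 1)
    (k : ℕ) : ∑ b : Fin k → A, (∏ i, μ (b i)) = 1 := by
  classical
  have h := Finset.prod_univ_sum (fun _ : Fin k => (Finset.univ : Finset A)) (fun _ a => μ a)
  rw [Fintype.piFinset_univ] at h
  rw [← h]
  simp [hμsum]


def bbf {A : Type*} (X : ℕ → A) (k t : ℕ) (j : ℕ) : Fin t → (Fin k → A) :=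
  fun s i => X (k * (j * t + s.1) + i.1)

def cntf {A : Type*} [DecidableEq A] (X : ℕ → A) (k t : ℕ) (w0 : Fin k → A) (j : ℕ) : ℕ :=
  (Finset.univ.filter (fun s : Fin t => bbf X k t j s = w0)).card

lemma P_iff {A : Type*} [DecidableEq A] (w : List A) (X : ℕ → A) (i : ℕ) :
    ((List.range w.length).map (fun jj => X (w.length * i + jj)) = w)
      ↔ (fun i2 : Fin w.length => X (w.length * i + i2.1)) = w.get := by
  rw [funext_iff]
  constructor
  · intro h i2
    have h' : (List.range w.length).map (fun jj => X (w.length * i + jj)) = List.ofFn w.get := by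
      rw [List.ofFn_get]; exact h
    exact (ofFn_match _ _).1 h' i2
  · intro h
    have h' : (List.range w.length).map (fun jj => X (w.length * i + jj)) = List.ofFn w.get :=
      (ofFn_match _ _).2 h
    rw [List.ofFn_get] at h'
    exact h'

lemma cnt_eq {A : Type*} [DecidableEq A] (w : List A) (X : ℕ → A) (t j : ℕ) :
    ((Finset.range t).filter
        (fun s => (List.range w.length).map (fun jj => X (w.length * (j*t+s) + jj)) = w)).card
      = cntf X w.length t w.get j := by
  rw [Finset.card_filter, cntf, Finset.card_filter,
    ← Fin.sum_univ_eq_sum_range (fun s => if (List.range w.length).map (fun jj => X (w.length * (j*t+s) + jj)) = w then 1 else 0) t]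
  refine Finset.sum_congr rfl fun s _ => ?_
  have hb : bbf X w.length t j s = fun i2 : Fin w.length => X (w.length * (j*t + s.1) + i2.1) := rfl
  simp only [P_iff w X (j*t+s.1), hb]

lemma nboccBlock_decomp {A : Type*} [DecidableEq A] (w : List A) (X : ℕ → A) (t : ℕ)
    (ht : 0 < t) (m : ℕ) :
    (∑ j ∈ Finset.range (m/t), cntf X w.length t w.get j) ≤ nboccBlock w X m ∧
      nboccBlock w X m ≤ (∑ j ∈ Finset.range (m/t), cntf X w.length t w.get j) + t := by
  have hlow : ((Finset.range ((m/t)*t)).filter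
      (fun i => (List.range w.length).map (fun jj => X (w.length * i + jj)) = w)).card
      = ∑ j ∈ Finset.range (m/t), cntf X w.length t w.get j := by
    rw [filter_range_mul_card]
    exact Finset.sum_congr rfl fun j _ => cnt_eq w X t j
  have hhi : ((Finset.range ((m/t+1)*t)).filter
      (fun i => (List.range w.length).map (fun jj => X (w.length * i + jj)) = w)).card
      = ∑ j ∈ Finset.range (m/t+1), cntf X w.length t w.get j := by
    rw [filter_range_mul_card]
    exact Finset.sum_congr rfl fun j _ => cnt_eq w X t j
  have h1 : (m/t)*t ≤ m := Nat.div_mul_le_self m t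
  have h2 : m ≤ (m/t+1)*t := by
    have := Nat.div_add_mod m t
    have := Nat.mod_lt m ht
    nlinarith [Nat.div_add_mod m t, Nat.mod_lt m ht]
  constructor
  · rw [nboccBlock, ← hlow]
    exact Finset.card_le_card (Finset.filter_subset_filter _
      (Finset.range_subset_range.2 h1))
  · rw [nboccBlock]
    calc ((Finset.range m).filter _).card
        ≤ ((Finset.range ((m/t+1)*t)).filter
            (fun i => (List.range w.length).map (fun jj => X (w.length * i + jj)) = w)).card :=
          Finset.card_le_card (Finset.filter_subset_filter _ (Finset.range_subset_range.2 h2))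
      _ = ∑ j ∈ Finset.range (m/t+1), cntf X w.length t w.get j := hhi
      _ ≤ (∑ j ∈ Finset.range (m/t), cntf X w.length t w.get j) + t := by
          rw [Finset.sum_range_succ]
          have : cntf X w.length t w.get (m/t) ≤ t := by
            rw [cntf]
            calc (Finset.univ.filter _).card ≤ (Finset.univ : Finset (Fin t)).card :=
                Finset.card_filter_le _ _
              _ = t := by simp
          omega

lemma badcount {A : Type*} [DecidableEq A] (X : ℕ → A) (k t : ℕ) (hk : 0 < k) (ht : 0 < t)
    (J n : ℕ) (hn : t*k*J ≤ n) (Bad : Finset (Fin t → (Fin k → A))) :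
    ((Finset.range J).filter (fun j => bbf X k t j ∈ Bad)).card
      ≤ ∑ y ∈ Bad, nbocc (twd y) X n := by
  rw [Finset.card_eq_sum_card_fiberwise
    (s := (Finset.range J).filter (fun j => bbf X k t j ∈ Bad))
    (f := bbf X k t) (t := Bad) (fun j hj => (Finset.mem_filter.1 hj).2)]
  refine Finset.sum_le_sum fun y hy => ?_
  rw [nbocc]
  refine Finset.card_le_card_of_injOn (fun j => t*k*j) ?_ ?_
  · intro j hj
    obtain ⟨hj1, hjy⟩ := Finset.mem_filter.1 hj
    obtain ⟨hjJ, _⟩ := Finset.mem_filter.1 hj1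
    rw [Finset.mem_range] at hjJ
    have hb : t*k*j + t*k ≤ n := by
      calc t*k*j + t*k = t*k*(j+1) := by ring
        _ ≤ t*k*J := Nat.mul_le_mul_left _ (by omega)
        _ ≤ n := hn
    have htk : 0 < t*k := Nat.mul_pos ht hk
    refine Finset.mem_filter.2 ⟨Finset.mem_range.2 ?_, ?_⟩
    · rw [length_twd]
      show t*k*j < n + 2 - t*k
      omega
    · rw [length_twd]
      refine (twd_occ X _ y).2 fun s i => ?_
      have h := congrFun (congrFun hjy s) i
      rw [bbf] at h
      rw [show t*k*j + (k * s.1 + i.1) = k*(j*t + s.1) + i.1 by ring]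
      exact h
  · intro a _ b _ hab
    have htk : 0 < t*k := Nat.mul_pos ht hk
    exact Nat.eq_of_mul_eq_mul_left htk hab

end NB


set_option maxHeartbeats 2000000 in
theorem normal_implies_block_normal
    {A : Type*} [Fintype A] [DecidableEq A]
    (μ : A → ℝ) (hμpos : ∀ a, 0 < μ a) (hμsum : ∑ a, μ a = 1)
    (X : ℕ → A) (hX : BNormal μ X) :
    ∀ w : List A, w ≠ [] →
      Tendsto (fun m => (nboccBlock w X m : ℝ) / m) atTop (𝓝 (wmeas μ w)) := by
  classical
  intro w hw
  have hk : 0 < w.length := List.length_pos_iff.2 hw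
  set ν : (Fin w.length → A) → ℝ := fun b => ∏ i, μ (b i) with hνdef
  have hν0 : ∀ b, 0 ≤ ν b := fun b => Finset.prod_nonneg fun i _ => (hμpos _).le
  have hν1 : ∑ b, ν b = 1 := NB.sum_nu μ hμsum w.length
  have hp_eq : wmeas μ w = ν w.get := by
    rw [wmeas]
    conv_lhs => rw [← List.ofFn_get w]
    rw [List.map_ofFn, List.prod_ofFn]
    rfl
  have hp0 : 0 ≤ wmeas μ w := by rw [hp_eq]; exact hν0 w.get
  have hp1 : wmeas μ w ≤ 1 := by
    rw [hp_eq, ← hν1]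
    exact Finset.single_le_sum (fun b _ => hν0 b) (Finset.mem_univ w.get)
  set p := wmeas μ w with hpdef
  rw [Metric.tendsto_atTop]
  intro ε hε
  set δ : ℝ := ε/4 with hδdef
  have hδ : 0 < δ := by positivity
  -- choose t
  obtain ⟨t0, ht0⟩ := exists_nat_gt (24 * ((w.length : ℝ)+2) / (δ^4 * ε))
  set t := t0 + 1 with htdef
  have ht : 0 < t := Nat.succ_pos t0
  have htR : (0:ℝ) < t := by exact_mod_cast ht
  have htc : 24 * ((w.length : ℝ)+2) < δ^4 * ε * t := by
    have h1 : 24 * ((w.length : ℝ)+2) / (δ^4 * ε) < t := by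
      refine lt_of_lt_of_le ht0 ?_
      exact_mod_cast Nat.le_succ t0
    calc 24*((w.length : ℝ)+2) = (24*((w.length : ℝ)+2)/(δ^4*ε)) * (δ^4*ε) := by field_simp
      _ < t * (δ^4*ε) := by exact mul_lt_mul_of_pos_right h1 (by positivity)
      _ = δ^4*ε*t := by ring
  -- the bad set
  set Bad : Finset (Fin t → (Fin w.length → A)) :=
    Finset.univ.filter (fun y => δ * t < |NB.SS ν w.get t y|) with hBadDef
  have hBadMeas : ∑ y ∈ Bad, (∏ j, ν (y j)) ≤ 3 / (δ^4 * t^2) :=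
    NB.cheb ν w.get hν0 hν1 t ht δ hδ
  clear_value Bad
  set η : ℝ := 3 / (δ^4 * t^2 * (Bad.card + 1)) with hηdef
  have hη : 0 < η := by
    rw [hηdef]
    exact div_pos (by norm_num) (mul_pos (mul_pos (pow_pos hδ 4) (pow_pos htR 2))
      (add_pos_of_nonneg_of_pos (Nat.cast_nonneg _) one_pos))
  have hD : (0:ℝ) < δ^4*t^2 := mul_pos (pow_pos hδ 4) (pow_pos htR 2)
  have hcBad : (0:ℝ) < (Bad.card:ℝ)+1 := add_pos_of_nonneg_of_pos (Nat.cast_nonneg _) one_pos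
  have hD2 : (0:ℝ) < δ^4*t^2*((Bad.card:ℝ)+1) := mul_pos hD hcBad
  have hηcard : (Bad.card : ℝ) * η ≤ 3 / (δ^4 * t^2) := by
    have e : (Bad.card : ℝ) * η = 3 * Bad.card / (δ^4 * t^2 * ((Bad.card:ℝ) + 1)) := by
      rw [hηdef]; ring
    rw [e, div_le_div_iff₀ hD2 hD]
    have hc : (0:ℝ) ≤ (Bad.card : ℝ) := Nat.cast_nonneg _
    nlinarith [hD, hD2]
  -- eventual bounds from normality for each bad word
  have hEv : ∀ᶠ n in atTop, ∀ y ∈ Bad,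
      (nbocc (NB.twd y) X n : ℝ) ≤ (wmeas μ (NB.twd y) + η) * ((n + 2 - t*w.length : ℕ) : ℝ) := by
    rw [Finset.eventually_all]
    intro y _
    have hy := hX (NB.twd y) (NB.twd_ne_nil hk ht y)
    have h1 : ∀ᶠ n in atTop, freq (NB.twd y) X n < wmeas μ (NB.twd y) + η :=
      hy.eventually_lt_const (lt_add_of_pos_right _ hη)
    filter_upwards [h1, eventually_ge_atTop (t*w.length)] with n hn1 hn2
    have hlen : (NB.twd y).length = t*w.length := NB.length_twd y
    have hden : (0:ℝ) < ((n + 2 - t*w.length : ℕ) : ℝ) := by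
      have : 0 < n + 2 - t*w.length := by omega
      exact_mod_cast this
    rw [freq, hlen] at hn1
    exact le_of_lt ((div_lt_iff₀ hden).1 hn1)
  rw [eventually_atTop] at hEv
  obtain ⟨N1, hN1⟩ := hEv
  obtain ⟨M2, hM2⟩ := exists_nat_gt (8 * (t:ℝ) / ε)
  refine ⟨max N1 (max M2 1), fun m hm => ?_⟩
  have hm1 : 1 ≤ m := le_trans (le_max_of_le_right (le_max_right M2 1)) hm
  have hmN1 : N1 ≤ m := le_trans (le_max_left _ _) hm
  have hmM2 : M2 ≤ m := le_trans (le_max_of_le_right (le_max_left M2 1)) hm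
  have hmR : (0:ℝ) < m := by exact_mod_cast hm1
  have htm : (t:ℝ) < ε/8 * m := by
    have h1 : 8 * (t:ℝ) / ε < m := lt_of_lt_of_le hM2 (by exact_mod_cast hmM2)
    rw [div_lt_iff₀ (by positivity)] at h1
    nlinarith
  -- counting decomposition
  set J := m / t with hJdef
  set cnt : ℕ → ℕ := NB.cntf X w.length t w.get with hcntdef
  have hcnt_eq : ∀ j, NB.cntf X w.length t w.get j = cnt j := fun _ => rfl
  obtain ⟨hdec1, hdec2⟩ := NB.nboccBlock_decomp w X t ht m
  simp only [← hJdef, hcnt_eq] at hdec1 hdec2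
  set Nbad := ((Finset.range J).filter (fun j => NB.bbf X w.length t j ∈ Bad)).card with hNbadDef
  -- per-block bounds
  have hcnt_le_t : ∀ j, (cnt j : ℝ) ≤ t := by
    intro j
    have : cnt j ≤ t := by
      rw [hcntdef, NB.cntf]
      calc (Finset.univ.filter _).card ≤ (Finset.univ : Finset (Fin t)).card :=
          Finset.card_filter_le _ _
        _ = t := by simp
    exact_mod_cast this
  have hSScnt : ∀ j, NB.SS ν w.get t (NB.bbf X w.length t j) = (cnt j : ℝ) - t * p := by
    intro j
    rw [NB.SS_eq_cnt, hp_eq]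
    rfl
  have hgood : ∀ j, NB.bbf X w.length t j ∉ Bad → |(cnt j : ℝ) - t * p| ≤ δ * t := by
    intro j hj
    rw [hBadDef] at hj
    simp only [Finset.mem_filter, Finset.mem_univ, true_and, not_lt] at hj
    rw [hSScnt j] at hj
    exact hj
  have hup : ∀ j ∈ Finset.range J, (cnt j : ℝ)
      ≤ t*(p+δ) + t*(if NB.bbf X w.length t j ∈ Bad then 1 else 0) := by
    intro j _
    by_cases hj : NB.bbf X w.length t j ∈ Bad
    · simp only [hj, if_true]
      have := hcnt_le_t j
      nlinarith [mul_nonneg htR.le (add_nonneg hp0 hδ.le)]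
    · simp only [hj, if_false]
      have := abs_le.1 (hgood j hj)
      nlinarith [this.2]
  have hlo : ∀ j ∈ Finset.range J, t*(p-δ) - t*(if NB.bbf X w.length t j ∈ Bad then 1 else 0)
      ≤ (cnt j : ℝ) := by
    intro j _
    by_cases hj : NB.bbf X w.length t j ∈ Bad
    · simp only [hj, if_true]
      have : (0:ℝ) ≤ (cnt j : ℝ) := by positivity
      nlinarith
    · simp only [hj, if_false]
      have := abs_le.1 (hgood j hj)
      nlinarith [this.1]
  have hsum_ind : ∑ j ∈ Finset.range J, (if NB.bbf X w.length t j ∈ Bad then (1:ℝ) else 0)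
      = (Nbad : ℝ) := by
    rw [hNbadDef, Finset.sum_boole]
  clear_value ν p δ t η J cnt
  -- bound on the number of bad blocks
  have hNbad : (Nbad : ℝ) ≤ 6 / (δ^4 * t^2) * ((w.length : ℝ) * m + 2) := by
    have h0 : t*w.length*J ≤ w.length*m := by
      calc t*w.length*J = w.length*(t*J) := by ring
        _ ≤ w.length*m := Nat.mul_le_mul_left _ (by rw [hJdef]; exact Nat.mul_div_le m t)
    have h1 : Nbad ≤ ∑ y ∈ Bad, nbocc (NB.twd y) X (w.length*m) :=
      NB.badcount X w.length t hk ht J (w.length*m) (by omega) Bad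
    have h2 : (∑ y ∈ Bad, (nbocc (NB.twd y) X (w.length*m) : ℝ))
        ≤ ∑ y ∈ Bad, (wmeas μ (NB.twd y) + η) * ((w.length*m + 2 - t*w.length : ℕ) : ℝ) := by
      refine Finset.sum_le_sum fun y hy => ?_
      exact hN1 (w.length*m) (le_trans hmN1 (Nat.le_mul_of_pos_left m hk)) y hy
    have h3 : (∑ y ∈ Bad, (wmeas μ (NB.twd y) + η) * ((w.length*m + 2 - t*w.length : ℕ) : ℝ))
        ≤ (∑ y ∈ Bad, (wmeas μ (NB.twd y) + η)) * ((w.length : ℝ)*m + 2) := by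
      rw [← Finset.sum_mul]
      refine mul_le_mul_of_nonneg_left ?_ ?_
      · calc ((w.length*m + 2 - t*w.length : ℕ) : ℝ) ≤ ((w.length*m + 2 : ℕ) : ℝ) := by
              exact_mod_cast Nat.sub_le _ _
          _ = (w.length : ℝ)*m + 2 := by push_cast; ring
      · refine Finset.sum_nonneg fun y _ => ?_
        have : 0 ≤ wmeas μ (NB.twd y) := by
          rw [NB.wmeas_twd]
          exact Finset.prod_nonneg fun j _ => Finset.prod_nonneg fun i _ => (hμpos _).le
        linarith
    have h4 : ∑ y ∈ Bad, (wmeas μ (NB.twd y) + η) ≤ 6 / (δ^4 * t^2) := by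
      rw [Finset.sum_add_distrib, Finset.sum_const, nsmul_eq_mul]
      have h5 : ∑ y ∈ Bad, wmeas μ (NB.twd y) = ∑ y ∈ Bad, (∏ j, ν (y j)) := by
        refine Finset.sum_congr rfl fun y _ => ?_
        rw [NB.wmeas_twd]
        simp only [hνdef]
      rw [h5]
      have := hBadMeas
      have := hηcard
      -- 3/(D) + 3/D = 6/D
      have h6 : 3 / (δ^4 * t^2) + 3 / (δ^4 * t^2) = 6 / (δ^4 * t^2) := by ring
      linarith
    have hcast : (Nbad : ℝ) ≤ ∑ y ∈ Bad, (nbocc (NB.twd y) X (w.length*m) : ℝ) := by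
      exact_mod_cast h1
    have hposfac : (0:ℝ) ≤ (w.length : ℝ)*m + 2 := by positivity
    calc (Nbad : ℝ) ≤ ∑ y ∈ Bad, (nbocc (NB.twd y) X (w.length*m) : ℝ) := hcast
      _ ≤ (∑ y ∈ Bad, (wmeas μ (NB.twd y) + η)) * ((w.length : ℝ)*m + 2) :=
          le_trans h2 h3
      _ ≤ 6 / (δ^4 * t^2) * ((w.length : ℝ)*m + 2) :=
          mul_le_mul_of_nonneg_right h4 hposfac
  -- the main numeric bounds
  have hJt_le : ((J*t : ℕ) : ℝ) ≤ m := by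
    rw [hJdef]
    exact_mod_cast Nat.div_mul_le_self m t
  have hm_lt : (m:ℝ) < J*t + t := by
    have h : m < J*t + t := by
      rw [hJdef]; exact Nat.lt_div_mul_add ht
    exact_mod_cast h
  have htNbad : (t:ℝ) * Nbad ≤ ε/4 * m := by
    have h1 : (t:ℝ) * Nbad ≤ (t:ℝ) * (6 / (δ^4 * t^2) * ((w.length : ℝ) * m + 2)) :=
      mul_le_mul_of_nonneg_left hNbad htR.le
    have h2 : (w.length : ℝ) * m + 2 ≤ ((w.length:ℝ) + 2) * m := by
      have : (1:ℝ) ≤ m := by exact_mod_cast hm1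
      nlinarith [(Nat.cast_pos (α := ℝ)).2 hk]
    have h3 : (t:ℝ) * (6 / (δ^4 * t^2) * ((w.length : ℝ) * m + 2))
        ≤ 6 * ((w.length:ℝ) + 2) / (δ^4 * t) * m := by
      have e : (t:ℝ) * (6 / (δ^4 * t^2)) = 6/(δ^4 * t) := by
        field_simp
      have hZnn : (0:ℝ) ≤ (w.length : ℝ) * m + 2 := by positivity
      calc (t:ℝ) * (6 / (δ^4 * t^2) * ((w.length : ℝ) * m + 2))
          = (6/(δ^4*t)) * ((w.length : ℝ) * m + 2) := by rw [← mul_assoc, e]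
        _ ≤ (6/(δ^4*t)) * (((w.length:ℝ)+2)*m) := by
            exact mul_le_mul_of_nonneg_left h2 (by positivity)
        _ = 6*((w.length:ℝ)+2)/(δ^4*t)*m := by ring
    have h4 : 6 * ((w.length:ℝ) + 2) / (δ^4 * t) * m ≤ ε/4 * m := by
      refine mul_le_mul_of_nonneg_right ?_ hmR.le
      rw [div_le_iff₀ (by positivity)]
      nlinarith
    linarith
  have hcntcast : ((∑ j ∈ Finset.range J, cnt j : ℕ) : ℝ) = ∑ j ∈ Finset.range J, (cnt j : ℝ) := by
    push_cast
    rfl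
  have hupper : (nboccBlock w X m : ℝ) ≤ m*(p+δ) + ε/4*m + t := by
    have h1 : (nboccBlock w X m : ℝ) ≤ ((∑ j ∈ Finset.range J, cnt j : ℕ) : ℝ) + t := by
      exact_mod_cast hdec2
    have h2 : ∑ j ∈ Finset.range J, (cnt j : ℝ)
        ≤ J*(t*(p+δ)) + t*Nbad := by
      calc ∑ j ∈ Finset.range J, (cnt j : ℝ)
          ≤ ∑ j ∈ Finset.range J, (t*(p+δ) + t*(if NB.bbf X w.length t j ∈ Bad then 1 else 0)) :=
            Finset.sum_le_sum hup
        _ = J*(t*(p+δ)) + t*(Nbad : ℝ) := by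
            rw [Finset.sum_add_distrib, Finset.sum_const, Finset.card_range, ← Finset.mul_sum,
              hsum_ind, nsmul_eq_mul]
      -- done
    have h3 : (J:ℝ)*(t*(p+δ)) ≤ m*(p+δ) := by
      have hJt : (J:ℝ)*(t:ℝ) ≤ m := by exact_mod_cast hJt_le
      nlinarith [add_nonneg hp0 hδ.le, hJt]
    rw [hcntcast] at h1
    linarith
  have hlower : (J:ℝ)*(t*(p-δ)) - ε/4*m ≤ (nboccBlock w X m : ℝ) := by
    have h1 : ((∑ j ∈ Finset.range J, cnt j : ℕ) : ℝ) ≤ (nboccBlock w X m : ℝ) := by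
      exact_mod_cast hdec1
    have h2 : (J:ℝ)*(t*(p-δ)) - t*Nbad ≤ ∑ j ∈ Finset.range J, (cnt j : ℝ) := by
      calc (J:ℝ)*(t*(p-δ)) - t*(Nbad:ℝ)
          = ∑ j ∈ Finset.range J, (t*(p-δ) - t*(if NB.bbf X w.length t j ∈ Bad then 1 else 0)) := by
            rw [Finset.sum_sub_distrib, Finset.sum_const, Finset.card_range, ← Finset.mul_sum,
              hsum_ind, nsmul_eq_mul]
        _ ≤ ∑ j ∈ Finset.range J, (cnt j : ℝ) := Finset.sum_le_sum hlo
    rw [hcntcast] at h1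
    linarith
  -- conclude
  rw [Real.dist_eq, abs_sub_lt_iff]
  have hNnn : (0:ℝ) ≤ (nboccBlock w X m : ℝ) := Nat.cast_nonneg _
  constructor
  · -- F - p < ε
    rw [sub_lt_iff_lt_add, div_lt_iff₀ hmR]
    nlinarith [hupper, htm, hε, hmR, hδdef.le, hδdef.ge]
  · -- p - F < ε
    have hgoal : (p - ε) * m < (nboccBlock w X m : ℝ) := by
      by_cases hpd : p ≤ δ
      · have : (p - ε)*m < 0 := by nlinarith
        linarith
      · push_neg at hpd
        have hJt_gt : (m:ℝ) - t ≤ (J:ℝ)*(t:ℝ) := by linarith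
        have h5 : ((m:ℝ) - t)*(p - δ) ≤ (J:ℝ)*(t*(p-δ)) := by
          have e : (J:ℝ)*(t*(p-δ)) = ((J:ℝ)*(t:ℝ))*(p-δ) := by ring
          rw [e]
          exact mul_le_mul_of_nonneg_right hJt_gt (by linarith)
        nlinarith [hlower, h5, htm, hp1, hδ, hmR, htR.le, hδdef.le, hδdef.ge]
    have h6 : p - ε < (nboccBlock w X m : ℝ)/m := by
      rw [lt_div_iff₀ hmR]; exact hgoal
    linarith
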